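/- Let φ ∈ C_c(ℝ) and let T_φ f = P^+(φ * f̃) be the corresponding Wiener–Hopf operator on 𝐄. Then T_φ commutes with 𝐒_t for every t > 0 if and only if the support of φ is contained in [0, +∞). (Lemma 4) -/

import Mathlib

open MeasureTheory Filter Complex Set
open scoped Real ENNReal Topology NNReal

noncomputable section

/-- The weighted measure `ω(x)^p dx` on `ℝ⁺ = [0,∞)` (a measure on `ℝ` carried by `[0,∞)`),
so that `𝐄 = L^p_ω(ℝ⁺)` is `Lp ℂ p (wmp p ω)`. -/
def wmp (p : ℝ) (ω : ℝ → ℝ) : Measure ℝ :=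
  (volume.restrict (Set.Ici (0 : ℝ))).withDensity fun x => ENNReal.ofReal (ω x ^ p)

/-- The Fourier–Laplace transform `φ̂(z) = ∫_ℝ φ(t) e^{-izt} dt`. -/
def fourierLaplace (φ : ℝ → ℂ) (z : ℂ) : ℂ :=
  ∫ t : ℝ, φ t * Complex.exp (-Complex.I * z * (t : ℂ))

/-- A convolution-type integral is insensitive to a.e. modification of the second factor. -/
lemma conv_congr_ae {φ g₁ g₂ : ℝ → ℂ} (h : g₁ =ᵐ[volume] g₂) (x : ℝ) :
    ∫ y, φ y * g₁ (x - y) = ∫ y, φ y * g₂ (x - y) := by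
  refine integral_congr_ae ?_
  have h2 := (Measure.measurePreserving_sub_left volume x).quasiMeasurePreserving.ae_eq h
  filter_upwards [h2] with y hy
  simp only [Function.comp] at hy
  rw [hy]

/-- Convolution of `φ` with the extension of `g` by zero to the negative half-line. -/
def cvl (φ g : ℝ → ℂ) (u : ℝ) : ℂ :=
  ∫ y : ℝ, φ y * Set.indicator (Set.Ici (0 : ℝ)) g (u - y)

/-- Lemma 4: for `φ ∈ C_c(ℝ)`, the Wiener–Hopf operator `T_φ f = P⁺(φ * f̃)` on `𝐄 = L^p_ω(ℝ⁺)`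
commutes with every right translation `𝐒_t`, `t > 0`, iff `supp φ ⊆ [0, ∞)`. -/
theorem lemma4
    (p : ℝ≥0∞) [Fact (1 ≤ p)] (hp : p ≠ ∞)
    (ω : ℝ → ℝ) (hω_cont : Continuous ω) (hω_pos : ∀ x, 0 < ω x)
    (hω_sub : ∀ t : ℝ, 0 ≤ t → ∃ c C : ℝ, 0 < c ∧
      ∀ x : ℝ, 0 ≤ x → c ≤ ω (x + t) / ω x ∧ ω (x + t) / ω x ≤ C)
    (Sp : ℝ → (Lp ℂ p (wmp p.toReal ω) →L[ℂ] Lp ℂ p (wmp p.toReal ω)))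
    (hSp : ∀ t : ℝ, 0 ≤ t → ∀ f : Lp ℂ p (wmp p.toReal ω),
      (Sp t f : ℝ → ℂ) =ᵐ[wmp p.toReal ω] fun x => if t ≤ x then f (x - t) else 0)
    (φ : ℝ → ℂ) (hφ_cont : Continuous φ) (hφ_supp : HasCompactSupport φ)
    (Tφ : Lp ℂ p (wmp p.toReal ω) →L[ℂ] Lp ℂ p (wmp p.toReal ω))
    (hTφ : ∀ f : Lp ℂ p (wmp p.toReal ω),
      (Tφ f : ℝ → ℂ) =ᵐ[wmp p.toReal ω]
        fun x => ∫ y : ℝ, φ y * Set.indicator (Set.Ici (0 : ℝ)) (⇑f) (x - y)) :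
    (∀ t : ℝ, 0 < t → Tφ.comp (Sp t) = (Sp t).comp Tφ) ↔ tsupport φ ⊆ Set.Ici (0 : ℝ) := by
  have hd_cont : Continuous fun x : ℝ => ω x ^ p.toReal :=
    hω_cont.rpow_const fun x => Or.inl (hω_pos x).ne'
  have hμν : wmp p.toReal ω ≪ volume.restrict (Set.Ici (0 : ℝ)) :=
    withDensity_absolutelyContinuous _ _
  have hνμ : volume.restrict (Set.Ici (0 : ℝ)) ≪ wmp p.toReal ω := by
    refine withDensity_absolutelyContinuous'
      (ENNReal.continuous_ofReal.comp hd_cont).measurable.aemeasurable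
      (ae_of_all _ fun x => ?_)
    exact (ENNReal.ofReal_pos.mpr (Real.rpow_pos_of_pos (hω_pos x) _)).ne'
  have hνvol : volume.restrict (Set.Ici (0 : ℝ)) ≪ (volume : Measure ℝ) :=
    Measure.absolutelyContinuous_of_le Measure.restrict_le_self
  have hμvol : wmp p.toReal ω ≪ (volume : Measure ℝ) := hμν.trans hνvol
  -- Key identity I : Tφ (Sp t f) is a.e. given by x ↦ (φ * f̃)(x - t)
  have keyI : ∀ t : ℝ, 0 < t → ∀ f : Lp ℂ p (wmp p.toReal ω),
      (⇑(Tφ (Sp t f)) : ℝ → ℂ) =ᵐ[wmp p.toReal ω] fun x => cvl φ (⇑f) (x - t) := by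
    intro t ht f
    refine (hTφ (Sp t f)).trans (ae_of_all _ fun x => ?_)
    have hg : Set.indicator (Set.Ici (0 : ℝ)) ⇑(Sp t f) =ᵐ[volume]
        fun u => Set.indicator (Set.Ici (0 : ℝ)) (⇑f) (u - t) := by
      have h2 : ∀ᵐ u ∂volume, u ∈ Set.Ici (0 : ℝ) →
          (Sp t f) u = (if t ≤ u then f (u - t) else 0) :=
        (ae_restrict_iff' measurableSet_Ici).mp ((hSp t ht.le f).filter_mono hνμ.ae_le)
      filter_upwards [h2] with u hu
      simp only [Set.indicator_apply, Set.mem_Ici]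
      split_ifs with h0 h1 h1
      · rw [hu h0, if_pos (by linarith)]
      · rw [hu h0, if_neg (by intro h; exact h1 (by linarith))]
      · exact absurd (by linarith : (0:ℝ) ≤ u) h0
      · rfl
    calc (∫ y : ℝ, φ y * Set.indicator (Set.Ici (0 : ℝ)) (⇑(Sp t f)) (x - y))
        = ∫ y : ℝ, φ y * Set.indicator (Set.Ici (0 : ℝ)) (⇑f) ((x - y) - t) :=
          conv_congr_ae hg x
      _ = cvl φ (⇑f) (x - t) := by
          simp only [cvl]
          refine integral_congr_ae (ae_of_all _ fun y => ?_)
          congr 2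
          ring
  -- Key identity II : Sp t (Tφ f) is a.e. x ↦ if t ≤ x then (φ * f̃)(x - t) else 0
  have keyII : ∀ t : ℝ, 0 < t → ∀ f : Lp ℂ p (wmp p.toReal ω),
      (⇑(Sp t (Tφ f)) : ℝ → ℂ) =ᵐ[wmp p.toReal ω]
        fun x => if t ≤ x then cvl φ (⇑f) (x - t) else 0 := by
    intro t ht f
    have h2 : ∀ᵐ u ∂volume, u ∈ Set.Ici (0 : ℝ) → (Tφ f) u = cvl φ (⇑f) u :=
      (ae_restrict_iff' measurableSet_Ici).mp ((hTφ f).filter_mono hνμ.ae_le)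
    have h3 : ∀ᵐ x ∂volume, x - t ∈ Set.Ici (0 : ℝ) →
        (Tφ f) (x - t) = cvl φ (⇑f) (x - t) :=
      (measurePreserving_sub_right volume t).quasiMeasurePreserving.ae h2
    have h3' : ∀ᵐ x ∂(wmp p.toReal ω), x - t ∈ Set.Ici (0 : ℝ) →
        (Tφ f) (x - t) = cvl φ (⇑f) (x - t) :=
      h3.filter_mono hμvol.ae_le
    filter_upwards [hSp t ht.le (Tφ f), h3'] with x hx1 hx3
    rw [hx1]
    by_cases hxt : t ≤ x
    · rw [if_pos hxt, if_pos hxt, hx3 (by simp only [Set.mem_Ici, sub_nonneg]; exact hxt)]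
    · rw [if_neg hxt, if_neg hxt]
  constructor
  · -- commutation ⟹ support in [0,∞)
    intro hcomm
    have hφ_int : Integrable φ volume := hφ_cont.integrable_of_hasCompactSupport hφ_supp
    -- with f = indicator of [0,ε], the convolution at u is ∫_{u-ε}^u φ ; it vanishes for u < 0
    have key : ∀ ε : ℝ, 0 < ε → ∀ u : ℝ, u < 0 → (∫ y in (u - ε)..u, φ y) = 0 := by
      intro ε hε
      -- finiteness of the weighted measure of [0, ε]
      have hμIcc : wmp p.toReal ω (Set.Icc (0 : ℝ) ε) ≠ ∞ := by
        obtain ⟨M, hM⟩ := isCompact_Icc.exists_bound_of_continuousOn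
          (hd_cont.continuousOn : ContinuousOn (fun x : ℝ => ω x ^ p.toReal) (Set.Icc 0 ε))
        have h1 : wmp p.toReal ω (Set.Icc (0 : ℝ) ε)
            = ∫⁻ x in Set.Icc (0 : ℝ) ε, ENNReal.ofReal (ω x ^ p.toReal)
                ∂(volume.restrict (Set.Ici (0 : ℝ))) :=
          withDensity_apply _ measurableSet_Icc
        have h2 : (∫⁻ x in Set.Icc (0 : ℝ) ε, ENNReal.ofReal (ω x ^ p.toReal)
              ∂(volume.restrict (Set.Ici (0 : ℝ))))
            ≤ ∫⁻ _ in Set.Icc (0 : ℝ) ε, ENNReal.ofReal M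
              ∂(volume.restrict (Set.Ici (0 : ℝ))) := by
          refine setLIntegral_mono measurable_const fun x hx => ?_
          exact ENNReal.ofReal_le_ofReal ((le_abs_self _).trans (by simpa using hM x hx))
        rw [h1]
        refine ne_top_of_le_ne_top ?_ h2
        rw [setLIntegral_const]
        refine ENNReal.mul_ne_top ENNReal.ofReal_ne_top ?_
        exact ne_top_of_le_ne_top (by simp : volume (Set.Icc (0:ℝ) ε) ≠ ∞)
          (Measure.restrict_le_self _)
      set fε : Lp ℂ p (wmp p.toReal ω) :=
        (memLp_indicator_const p measurableSet_Icc (1 : ℂ) (Or.inr hμIcc)).toLp _ with hfεdef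
      have hfε : ⇑fε =ᵐ[wmp p.toReal ω] Set.indicator (Set.Icc 0 ε) fun _ => (1 : ℂ) :=
        MemLp.coeFn_toLp _
      -- the extension of fε by zero is volume-a.e. the indicator of [0, ε]
      have hext : Set.indicator (Set.Ici (0 : ℝ)) ⇑fε =ᵐ[volume]
          Set.indicator (Set.Icc 0 ε) fun _ => (1 : ℂ) := by
        have h2 : ∀ᵐ u ∂volume, u ∈ Set.Ici (0 : ℝ) →
            fε u = Set.indicator (Set.Icc 0 ε) (fun _ => (1 : ℂ)) u :=
          (ae_restrict_iff' measurableSet_Ici).mp (hfε.filter_mono hνμ.ae_le)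
        filter_upwards [h2] with u hu
        by_cases h0 : u ∈ Set.Ici (0 : ℝ)
        · rw [Set.indicator_of_mem h0, hu h0]
        · rw [Set.indicator_of_notMem h0, Set.indicator_of_notMem (fun h => h0 h.1)]
      -- the convolution with fε is an interval integral of φ
      have hconv : ∀ u : ℝ, cvl φ (⇑fε) u = ∫ y in (u - ε)..u, φ y := by
        intro u
        have h1 : cvl φ (⇑fε) u =
            ∫ y : ℝ, φ y * Set.indicator (Set.Icc 0 ε) (fun _ => (1 : ℂ)) (u - y) :=
          conv_congr_ae hext u
        rw [h1]
        have h2 : ∀ y : ℝ, φ y * Set.indicator (Set.Icc 0 ε) (fun _ => (1 : ℂ)) (u - y)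
            = Set.indicator (Set.Icc (u - ε) u) φ y := by
          intro y
          simp only [Set.indicator_apply, Set.mem_Icc]
          split_ifs with h1 h2 h2
          · rw [mul_one]
          · exact absurd ⟨by linarith [h1.2], by linarith [h1.1]⟩ h2
          · exact absurd ⟨by linarith [h2.2], by linarith [h2.1]⟩ h1
          · rw [mul_zero]
        simp only [h2]
        rw [integral_indicator measurableSet_Icc,
          intervalIntegral.integral_of_le (by linarith), ← integral_Icc_eq_integral_Ioc]
      -- from the commutation relation, the convolution vanishes a.e. on (-∞, 0)
      have hvan : ∀ t : ℝ, 0 < t →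
          ∀ᵐ u ∂volume, -t ≤ u → u < 0 → cvl φ (⇑fε) u = 0 := by
        intro t ht
        have heq : Tφ (Sp t fε) = Sp t (Tφ fε) := by
          have h := hcomm t ht
          calc Tφ (Sp t fε) = (Tφ.comp (Sp t)) fε := rfl
            _ = ((Sp t).comp Tφ) fε := by rw [h]
            _ = Sp t (Tφ fε) := rfl
        have hae : (fun x => cvl φ (⇑fε) (x - t)) =ᵐ[wmp p.toReal ω]
            fun x => if t ≤ x then cvl φ (⇑fε) (x - t) else 0 := by
          refine (keyI t ht fε).symm.trans ?_
          rw [heq]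
          exact keyII t ht fε
        have hae2 : ∀ᵐ x ∂volume, x ∈ Set.Ici (0 : ℝ) →
            cvl φ (⇑fε) (x - t) = if t ≤ x then cvl φ (⇑fε) (x - t) else 0 :=
          (ae_restrict_iff' measurableSet_Ici).mp (hae.filter_mono hνμ.ae_le)
        have hae3 : ∀ᵐ u ∂volume, (u + t) ∈ Set.Ici (0 : ℝ) →
            cvl φ (⇑fε) ((u + t) - t) = if t ≤ u + t then cvl φ (⇑fε) ((u + t) - t) else 0 :=
          (measurePreserving_add_right volume t).quasiMeasurePreserving.ae hae2
        filter_upwards [hae3] with u hu h1 h2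
        have h3 := hu (by simp only [Set.mem_Ici]; linarith)
        rw [if_neg (by linarith)] at h3
        simpa using h3
      -- combining over t = n + 1: the convolution vanishes a.e. on (-∞, 0)
      have hvan2 : ∀ᵐ u ∂volume, u < 0 → cvl φ (⇑fε) u = 0 := by
        have hall := ae_all_iff.mpr fun n : ℕ => hvan (n + 1) (by positivity)
        filter_upwards [hall] with u hu hu0
        obtain ⟨n, hn⟩ := exists_nat_ge (-u)
        exact hu n (by push_cast; linarith) hu0
      -- continuity of the convolution
      have hcont : Continuous fun u => cvl φ (⇑fε) u := by
        have heq : ∀ u : ℝ, cvl φ (⇑fε) u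
            = (∫ y in (0:ℝ)..u, φ y) - ∫ y in (0:ℝ)..(u - ε), φ y := by
          intro u
          rw [hconv u, ← intervalIntegral.integral_interval_sub_left
            (hφ_int.intervalIntegrable) (hφ_int.intervalIntegrable)]
        simp only [heq]
        have hG : Continuous fun u : ℝ => ∫ y in (0:ℝ)..u, φ y :=
          intervalIntegral.continuous_primitive (fun _ _ => hφ_int.intervalIntegrable) 0
        exact hG.sub (hG.comp (continuous_id.sub continuous_const))
      -- a continuous function vanishing a.e. on the open set (-∞,0) vanishes there
      have hzero : ∀ u : ℝ, u < 0 → cvl φ (⇑fε) u = 0 := by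
        have hopen : IsOpen {u : ℝ | u < 0 ∧ cvl φ (⇑fε) u ≠ 0} := by
          have hset : {u : ℝ | u < 0 ∧ cvl φ (⇑fε) u ≠ 0} =
              Set.Iio 0 ∩ (fun u => cvl φ (⇑fε) u) ⁻¹' {0}ᶜ := by
            ext u
            simp [Set.mem_setOf_eq, Set.mem_Iio]
          rw [hset]
          exact isOpen_Iio.inter (hcont.isOpen_preimage _ isOpen_compl_singleton)
        have hnull : volume {u : ℝ | u < 0 ∧ cvl φ (⇑fε) u ≠ 0} = 0 := by
          have h := ae_iff.mp hvan2
          refine measure_mono_null (fun u hu => ?_) h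
          simp only [Set.mem_setOf_eq] at hu ⊢
          intro hcontra
          exact hu.2 (hcontra hu.1)
        have hempty := hopen.eq_empty_of_measure_zero hnull
        intro u hu
        by_contra hne
        exact Set.eq_empty_iff_forall_notMem.mp hempty u ⟨hu, hne⟩
      intro u hu
      rw [← hconv u]
      exact hzero u hu
    -- conclude that φ vanishes on (-∞, 0)
    have hφ0 : ∀ s : ℝ, s < 0 → φ s = 0 := by
      intro s hs
      set G : ℝ → ℂ := fun u => ∫ y in (0:ℝ)..u, φ y with hGdef
      have hGconst : ∀ u : ℝ, u < 0 → G u = G s := by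
        intro u hu
        rcases lt_trichotomy u s with h | h | h
        · have hk := key (s - u) (by linarith) s hs
          have h3 : s - (s - u) = u := by ring
          rw [h3] at hk
          have h2 : (∫ y in u..s, φ y) = G s - G u := by
            rw [hGdef]
            exact (intervalIntegral.integral_interval_sub_left
              hφ_int.intervalIntegrable hφ_int.intervalIntegrable).symm
          rw [hk] at h2
          linear_combination h2
        · rw [h]
        · have hk := key (u - s) (by linarith) u hu
          have h3 : u - (u - s) = s := by ring
          rw [h3] at hk
          have h2 : (∫ y in s..u, φ y) = G u - G s := by
            rw [hGdef]
            exact (intervalIntegral.integral_interval_sub_left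
              hφ_int.intervalIntegrable hφ_int.intervalIntegrable).symm
          rw [hk] at h2
          linear_combination -h2
      have hderiv : HasDerivAt G (φ s) s :=
        intervalIntegral.integral_hasDerivAt_right (hφ_int.intervalIntegrable)
          (hφ_cont.stronglyMeasurableAtFilter _ _) hφ_cont.continuousAt
      have hconst : HasDerivAt G 0 s := by
        have hev : G =ᶠ[𝓝 s] fun _ => G s := by
          filter_upwards [Iio_mem_nhds hs] with u hu
          exact hGconst u hu
        exact (hasDerivAt_const s (G s)).congr_of_eventuallyEq hev
      exact hderiv.unique hconst
    refine closure_minimal ?_ isClosed_Ici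
    intro s hs
    by_contra h0
    simp only [Set.mem_Ici, not_le] at h0
    exact hs (hφ0 s h0)
  · -- support in [0,∞) ⟹ commutation
    intro hsupp t ht
    refine ContinuousLinearMap.ext fun f => ?_
    rw [ContinuousLinearMap.comp_apply, ContinuousLinearMap.comp_apply]
    refine Lp.ext ?_
    refine (keyI t ht f).trans (Filter.EventuallyEq.trans (ae_of_all _ fun x => ?_)
      (keyII t ht f).symm)
    by_cases hxt : t ≤ x
    · rw [if_pos hxt]
    · rw [if_neg hxt]
      have hzero : ∀ y : ℝ, φ y * Set.indicator (Set.Ici (0 : ℝ)) (⇑f) ((x - t) - y) = 0 := by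
        intro y
        by_cases hy : (0 : ℝ) ≤ y
        · rw [Set.indicator_of_notMem, mul_zero]
          simp only [Set.mem_Ici, not_le]
          have hx0 : x - t < 0 := by linarith [lt_of_not_ge hxt]
          linarith
        · rw [image_eq_zero_of_notMem_tsupport (fun hmem => hy (hsupp hmem)), zero_mul]
      simp only [cvl, hzero, integral_zero]

end
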